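/- In any ordered goods instance with m ≥ n + 1 items, if there is an agent i with v_i({n, n+1}) ≥ μ_i, then removing agent i together with the items {n, n+1} (allocating {n, n+1} to i) is a valid reduction. -/

import Mathlib

open Finset

/-- `A` is an (ordered) partition of the item set `M` into bundles indexed by
the agent set `N`: bundles are pairwise disjoint subsets of `M` whose union is `M`. -/
def IsPartition (N M : Finset ℕ) (A : ℕ → Finset ℕ) : Prop :=
  (∀ i ∈ N, A i ⊆ M) ∧
  (∀ i ∈ N, ∀ j ∈ N, i ≠ j → Disjoint (A i) (A j)) ∧
  N.biUnion A = M

/-- Additive value of a bundle `B` under item values `v`. -/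
noncomputable def bval (v : ℕ → ℝ) (B : Finset ℕ) : ℝ := ∑ g ∈ B, v g

/-- The maximin share of an agent with item values `v`, over the instance with
agent set `N` and item set `M`: the largest, over all partitions, of the minimum
bundle value. -/
noncomputable def mms (N M : Finset ℕ) (v : ℕ → ℝ) : ℝ :=
  sSup { x | ∃ A : ℕ → Finset ℕ, IsPartition N M A ∧
    x = sInf ((fun i => bval v (A i)) '' (N : Set ℕ)) }

/-- `A` is an MMS partition for an agent with item values `v`: every bundle is
worth at least the agent's maximin share. -/
def IsMMSPartition (N M : Finset ℕ) (v : ℕ → ℝ) (A : ℕ → Finset ℕ) : Prop :=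
  IsPartition N M A ∧ ∀ j ∈ N, mms N M v ≤ bval v (A j)

/-- The instance `(N, M, v)` admits an MMS allocation: an allocation giving
every agent a bundle worth at least her maximin share. -/
def ExistsMMSAllocation (N M : Finset ℕ) (v : ℕ → ℕ → ℝ) : Prop :=
  ∃ A : ℕ → Finset ℕ, IsPartition N M A ∧
    ∀ i ∈ N, mms N M (v i) ≤ bval (v i) (A i)

/-- A goods instance: all item values are non-negative. -/
def GoodsInstance (N M : Finset ℕ) (v : ℕ → ℕ → ℝ) : Prop :=
  ∀ i ∈ N, ∀ j ∈ M, 0 ≤ v i j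

/-- A chores instance: all item values are non-positive. -/
def ChoresInstance (N M : Finset ℕ) (v : ℕ → ℕ → ℝ) : Prop :=
  ∀ i ∈ N, ∀ j ∈ M, v i j ≤ 0

/-- Ordered goods instance: lower-numbered items are (weakly) more valuable. -/
def OrderedGoods (N M : Finset ℕ) (v : ℕ → ℕ → ℝ) : Prop :=
  ∀ i ∈ N, ∀ j ∈ M, ∀ k ∈ M, j ≤ k → v i k ≤ v i j

/-- Ordered chores instance: lower-numbered items are (weakly) worse. -/
def OrderedChores (N M : Finset ℕ) (v : ℕ → ℕ → ℝ) : Prop :=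
  ∀ i ∈ N, ∀ j ∈ M, ∀ k ∈ M, j ≤ k → v i j ≤ v i k

/-- Removing agents `N'` and items `M'` is a valid reduction: `M'` can be
partitioned among the agents of `N'` so that each receives a bundle worth at
least her MMS in the original instance, and in the reduced instance every
remaining agent's MMS is at least her MMS in the original instance. -/
def ValidReduction (N M : Finset ℕ) (v : ℕ → ℕ → ℝ) (N' M' : Finset ℕ) : Prop :=
  N' ⊆ N ∧ M' ⊆ M ∧
  (∃ B : ℕ → Finset ℕ, IsPartition N' M' B ∧
    ∀ i ∈ N', mms N M (v i) ≤ bval (v i) (B i)) ∧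
  ∀ i ∈ N \ N', mms N M (v i) ≤ mms (N \ N') (M \ M') (v i)

/-- In an ordered instance, bundle `B` dominates bundle `B'`: there is an
injective map `f : B' → B` with `f j ≤ j` for all `j ∈ B'`. -/
def Dominates (B B' : Finset ℕ) : Prop :=
  ∃ f : ℕ → ℕ, Set.InjOn f (B' : Set ℕ) ∧ ∀ j ∈ B', f j ∈ B ∧ f j ≤ j

lemma mmsSet_finite (N M : Finset ℕ) (v : ℕ → ℝ) :
    { x | ∃ A : ℕ → Finset ℕ, IsPartition N M A ∧
      x = sInf ((fun i => bval v (A i)) '' (N : Set ℕ)) }.Finite := by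
  have : { x | ∃ A : ℕ → Finset ℕ, IsPartition N M A ∧
      x = sInf ((fun i => bval v (A i)) '' (N : Set ℕ)) } ⊆
      Set.range (fun p : (↥N → ↥M.powerset) =>
        sInf ((fun i => bval v (if h : i ∈ N then (p ⟨i, h⟩ : Finset ℕ) else ∅)) '' (N : Set ℕ))) := by
    rintro x ⟨A, hA, rfl⟩
    refine ⟨fun j => ⟨A j, Finset.mem_powerset.mpr (hA.1 j j.2)⟩, ?_⟩
    simp only
    congr 1
    apply Set.image_congr
    intro a ha
    simp only [Set.mem_setOf_eq, Finset.mem_coe] at ha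
    rw [dif_pos ha]
  exact Set.Finite.subset (Set.finite_range _) this

lemma mmsSet_nonempty (N M : Finset ℕ) (v : ℕ → ℝ) (hN : N.Nonempty) :
    { x | ∃ A : ℕ → Finset ℕ, IsPartition N M A ∧
      x = sInf ((fun i => bval v (A i)) '' (N : Set ℕ)) }.Nonempty := by
  obtain ⟨j0, hj0⟩ := hN
  refine ⟨_, (fun j => if j = j0 then M else ∅), ⟨?_, ?_, ?_⟩, rfl⟩
  · intro j _
    by_cases h : j = j0 <;> simp [h]
  · intro a _ b _ hab
    by_cases ha : a = j0 <;> by_cases hb : b = j0 <;> simp_all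
  · apply Finset.Subset.antisymm
    · intro x hx
      simp only [Finset.mem_biUnion] at hx
      obtain ⟨j, _, hj⟩ := hx
      by_cases h : j = j0 <;> simp [h] at hj
      exact hj
    · intro x hx
      exact Finset.mem_biUnion.mpr ⟨j0, hj0, by simp [hx]⟩

lemma exists_mms_partition (N M : Finset ℕ) (v : ℕ → ℝ) (hN : N.Nonempty) :
    ∃ A, IsPartition N M A ∧ ∀ j ∈ N, mms N M v ≤ bval v (A j) := by
  have hmem := (mmsSet_nonempty N M v hN).csSup_mem (mmsSet_finite N M v)
  obtain ⟨A, hA, heq⟩ := hmem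
  refine ⟨A, hA, fun j hj => ?_⟩
  rw [show mms N M v = _ from heq]
  exact csInf_le (((N : Set ℕ).toFinite.image _).bddBelow) ⟨j, hj, rfl⟩

lemma le_mms_of_partition (N M : Finset ℕ) (v : ℕ → ℝ) (A : ℕ → Finset ℕ)
    (hA : IsPartition N M A) (μ : ℝ) (hN : N.Nonempty)
    (h : ∀ j ∈ N, μ ≤ bval v (A j)) : μ ≤ mms N M v := by
  have h1 : μ ≤ sInf ((fun i => bval v (A i)) '' (N : Set ℕ)) := by
    apply le_csInf
    · exact ⟨_, ⟨hN.choose, hN.choose_spec, rfl⟩⟩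
    · rintro b ⟨j, hj, rfl⟩; exact h j hj
  exact h1.trans (le_csSup ((mmsSet_finite N M v).bddAbove) ⟨A, hA, rfl⟩)

lemma reduction_step (n m : ℕ) (hm : n + 1 ≤ m) (hn1 : 1 ≤ n) (w : ℕ → ℝ)
    (hw : ∀ j ∈ Finset.Icc 1 m, 0 ≤ w j)
    (hord : ∀ j ∈ Finset.Icc 1 m, ∀ k ∈ Finset.Icc 1 m, j ≤ k → w k ≤ w j)
    (i : ℕ) (hi : i ∈ Finset.Icc 1 n) (i' : ℕ) (hi' : i' ∈ Finset.Icc 1 n \ {i}) :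
    mms (Finset.Icc 1 n) (Finset.Icc 1 m) w ≤
      mms (Finset.Icc 1 n \ {i}) (Finset.Icc 1 m \ {n, n+1}) w := by
  classical
  set N := Finset.Icc 1 n with hN
  set M := Finset.Icc 1 m with hM
  set μ := mms N M w with hμdef
  have hNne : N.Nonempty := ⟨1, Finset.mem_Icc.mpr ⟨le_refl 1, hn1⟩⟩
  obtain ⟨A, ⟨hA1, hA2, hA3⟩, hAmin⟩ := exists_mms_partition N M w hNne
  have hnM : n ∈ M := Finset.mem_Icc.mpr ⟨hn1, (Nat.le_succ n).trans hm⟩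
  have hn1M : n+1 ∈ M := Finset.mem_Icc.mpr ⟨hn1.trans (Nat.le_succ n), hm⟩
  have hsub : Finset.Icc 1 (n+1) ⊆ M := Finset.Icc_subset_Icc_right hm
  set f : ℕ → ℕ := fun t => if h : ∃ j ∈ N, t ∈ A j then h.choose else 0 with hf
  have hfspec : ∀ t ∈ Finset.Icc 1 (n+1), f t ∈ N ∧ t ∈ A (f t) := by
    intro t ht
    have : t ∈ N.biUnion A := hA3 ▸ hsub ht
    obtain ⟨j, hj, hjt⟩ := Finset.mem_biUnion.mp this
    have hex : ∃ j ∈ N, t ∈ A j := ⟨j, hj, hjt⟩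
    rw [hf]; simp only [dif_pos hex]
    exact ⟨hex.choose_spec.1, hex.choose_spec.2⟩
  have hcard : N.card < (Finset.Icc 1 (n+1)).card := by
    rw [hN]; simp [Nat.card_Icc]
  obtain ⟨x, hx, y, hy, hxy, hfxy⟩ :=
    Finset.exists_ne_map_eq_of_card_lt_of_maps_to hcard (fun t ht => (hfspec t ht).1)
  obtain ⟨a, b, hab, haI, hbI, hk⟩ : ∃ a b, a < b ∧ a ∈ Finset.Icc 1 (n+1) ∧
      b ∈ Finset.Icc 1 (n+1) ∧ f a = f b := by
    rcases lt_or_gt_of_ne hxy with h | h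
    exacts [⟨x, y, h, hx, hy, hfxy⟩, ⟨y, x, h, hy, hx, hfxy.symm⟩]
  set k := f a with hkdef
  have hkN : k ∈ N := (hfspec a haI).1
  have haA : a ∈ A k := (hfspec a haI).2
  have hbA : b ∈ A k := by show b ∈ A k; rw [hk]; exact (hfspec b hbI).2
  have hbn1 : b ≤ n + 1 := (Finset.mem_Icc.mp hbI).2
  have han : a ≤ n := Nat.lt_succ_iff.mp (lt_of_lt_of_le hab hbn1)
  have haM : a ∈ M := hsub haI
  have hbM : b ∈ M := hsub hbI
  set c : ℕ := if n ∈ A k then a else b with hc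
  have hcM : c ∈ M := by rw [hc]; split <;> assumption
  have hcle : c ≤ n + 1 := by rw [hc]; split; exacts [han.trans (Nat.le_succ n), hbn1]
  have hcAk : c ∈ A k := by rw [hc]; split <;> assumption
  have hd : ∀ j ∈ N, j ≠ k → Disjoint (A k) (A j) := fun j hj hjk => hA2 k hkN j hj (Ne.symm hjk)
  have hF1 : ∀ j ∈ N, j ≠ k → n ∈ A j → a ≠ n ∧ a ≠ n + 1 := by
    intro j hj hjk hn
    refine ⟨fun h => ?_, by omega⟩
    exact (Finset.disjoint_left.mp (hd j hj hjk) haA) (h ▸ hn)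
  have hcb : ∀ j ∈ N, j ≠ k → n ∈ A j → c = b := by
    intro j hj hjk hn
    rw [hc, if_neg (fun h => (Finset.disjoint_left.mp (hd j hj hjk) h) hn)]
  have hF2 : ∀ j ∈ N, j ≠ k → n + 1 ∈ A j → c ≠ n ∧ c ≠ n + 1 := by
    intro j hj hjk hn1j
    have hbAj : b ≠ n + 1 := fun h => (Finset.disjoint_left.mp (hd j hj hjk) hbA) (h ▸ hn1j)
    have hbn : b ≤ n := by omega
    rw [hc]; split
    · omega
    · next h => exact ⟨fun hbn' => h (hbn' ▸ hbA), by omega⟩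
  set rep : ℕ → Finset ℕ :=
    fun j => (if n ∈ A j then {a} else ∅) ∪ (if n+1 ∈ A j then {c} else ∅) with hrep
  have hmemrep : ∀ j x, x ∈ rep j ↔ (n ∈ A j ∧ x = a) ∨ (n+1 ∈ A j ∧ x = c) := by
    intro j x
    rw [hrep]
    simp only [Finset.mem_union]
    constructor
    · rintro (hx | hx)
      · by_cases h : n ∈ A j
        · rw [if_pos h] at hx; exact Or.inl ⟨h, Finset.mem_singleton.mp hx⟩
        · rw [if_neg h] at hx; exact absurd hx (Finset.notMem_empty x)
      · by_cases h : n+1 ∈ A j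
        · rw [if_pos h] at hx; exact Or.inr ⟨h, Finset.mem_singleton.mp hx⟩
        · rw [if_neg h] at hx; exact absurd hx (Finset.notMem_empty x)
    · rintro (⟨h, rfl⟩ | ⟨h, rfl⟩)
      · exact Or.inl (by rw [if_pos h]; exact Finset.mem_singleton_self _)
      · exact Or.inr (by rw [if_pos h]; exact Finset.mem_singleton_self _)
  have hrepAk : ∀ j, rep j ⊆ A k := by
    intro j x hx
    rcases (hmemrep j x).mp hx with ⟨-, rfl⟩ | ⟨-, rfl⟩
    exacts [haA, hcAk]
  set B : ℕ → Finset ℕ := fun j => (A j \ {n, n+1}) ∪ rep j with hB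
  have hBsub : ∀ j ∈ N, j ≠ k → B j ⊆ M \ {n, n+1} := by
    intro j hj hjk x hx
    rw [hB] at hx
    rcases Finset.mem_union.mp hx with hx | hx
    · obtain ⟨h1, h2⟩ := Finset.mem_sdiff.mp hx
      exact Finset.mem_sdiff.mpr ⟨hA1 j hj h1, h2⟩
    · rcases (hmemrep j x).mp hx with ⟨hn, rfl⟩ | ⟨hn, rfl⟩
      · refine Finset.mem_sdiff.mpr ⟨haM, ?_⟩
        obtain ⟨e1, e2⟩ := hF1 j hj hjk hn
        simp [e1, e2]
      · refine Finset.mem_sdiff.mpr ⟨hcM, ?_⟩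
        obtain ⟨e1, e2⟩ := hF2 j hj hjk hn
        simp [e1, e2]
  have hBdisj : ∀ j ∈ N, ∀ j' ∈ N, j ≠ k → j' ≠ k → j ≠ j' → Disjoint (B j) (B j') := by
    intro j hj j' hj' hjk hj'k hjj'
    rw [Finset.disjoint_left]
    intro x hxj hxj'
    rw [hB] at hxj hxj'
    have hAx : ∀ jj ∈ N, jj ≠ k → x ∈ A jj \ {n,n+1} → x ∉ A k := by
      intro jj hjj hjjk hxx
      exact fun hk' => Finset.disjoint_left.mp (hd jj hjj hjjk) hk' (Finset.mem_sdiff.mp hxx).1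
    rcases Finset.mem_union.mp hxj with h1 | h1 <;> rcases Finset.mem_union.mp hxj' with h2 | h2
    · exact Finset.disjoint_left.mp (hA2 j hj j' hj' hjj') (Finset.mem_sdiff.mp h1).1
        (Finset.mem_sdiff.mp h2).1
    · exact hAx j hj hjk h1 (hrepAk j' h2)
    · exact hAx j' hj' hj'k h2 (hrepAk j h1)
    · rcases (hmemrep j x).mp h1 with ⟨hn, he1⟩ | ⟨hn, he1⟩ <;>
        rcases (hmemrep j' x).mp h2 with ⟨hn', he2⟩ | ⟨hn', he2⟩
      · exact Finset.disjoint_left.mp (hA2 j hj j' hj' hjj') hn hn'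
      · have hcb' := hcb j hj hjk hn
        omega
      · have hcb' := hcb j' hj' hj'k hn'
        omega
      · exact Finset.disjoint_left.mp (hA2 j hj j' hj' hjj') hn hn'
  have hwa : w n ≤ w a := hord a haM n hnM han
  have hwc : w (n+1) ≤ w c := hord c hcM (n+1) hn1M hcle
  have hBval : ∀ j ∈ N, j ≠ k → bval w (A j) ≤ bval w (B j) := by
    intro j hj hjk
    have hdisjrep : Disjoint (A j \ {n,n+1}) (rep j) := by
      rw [Finset.disjoint_left]
      intro x hx hx'
      exact Finset.disjoint_left.mp (hd j hj hjk) (hrepAk j hx') (Finset.mem_sdiff.mp hx).1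
    have e1 : bval w (B j) = bval w (A j \ {n,n+1}) + bval w (rep j) := by
      rw [hB]; exact Finset.sum_union hdisjrep
    have e2 : bval w (A j) = bval w (A j ∩ {n,n+1}) + bval w (A j \ {n,n+1}) :=
      (Finset.sum_inter_add_sum_sdiff _ _ _).symm
    rw [e1, e2]
    have key : bval w (A j ∩ {n,n+1}) ≤ bval w (rep j) := by
      by_cases hn : n ∈ A j <;> by_cases hn1j : n+1 ∈ A j
      · have hcb' : c = b := hcb j hj hjk hn
        have hint : A j ∩ {n, n+1} = {n, n+1} := by
          ext t
          simp only [Finset.mem_inter, Finset.mem_insert, Finset.mem_singleton]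
          constructor
          · rintro ⟨-, h⟩; exact h
          · rintro (rfl | rfl); exacts [⟨hn, Or.inl rfl⟩, ⟨hn1j, Or.inr rfl⟩]
        have hrepj : rep j = {a, c} := by
          ext t
          rw [hmemrep]
          simp only [Finset.mem_insert, Finset.mem_singleton]
          constructor
          · rintro (⟨-, rfl⟩ | ⟨-, rfl⟩); exacts [Or.inl rfl, Or.inr rfl]
          · rintro (rfl | rfl); exacts [Or.inl ⟨hn, rfl⟩, Or.inr ⟨hn1j, rfl⟩]
        rw [hint, hrepj]
        simp only [bval]
        rw [Finset.sum_pair (by omega : n ≠ n+1), Finset.sum_pair (by rw [hcb']; omega : a ≠ c)]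
        exact add_le_add hwa hwc
      · have hint : A j ∩ {n, n+1} = {n} := by
          ext t
          simp only [Finset.mem_inter, Finset.mem_insert, Finset.mem_singleton]
          constructor
          · rintro ⟨ht, h | h⟩; exacts [h, absurd (h ▸ ht) hn1j]
          · rintro rfl; exact ⟨hn, Or.inl rfl⟩
        have hrepj : rep j = {a} := by
          ext t
          rw [hmemrep]
          simp only [Finset.mem_singleton]
          constructor
          · rintro (⟨-, rfl⟩ | ⟨h, rfl⟩); exacts [rfl, absurd h hn1j]
          · rintro rfl; exact Or.inl ⟨hn, rfl⟩
        rw [hint, hrepj]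
        simp only [bval]
        rw [Finset.sum_singleton, Finset.sum_singleton]
        exact hwa
      · have hint : A j ∩ {n, n+1} = {n+1} := by
          ext t
          simp only [Finset.mem_inter, Finset.mem_insert, Finset.mem_singleton]
          constructor
          · rintro ⟨ht, h | h⟩; exacts [absurd (h ▸ ht) hn, h]
          · rintro rfl; exact ⟨hn1j, Or.inr rfl⟩
        have hrepj : rep j = {c} := by
          ext t
          rw [hmemrep]
          simp only [Finset.mem_singleton]
          constructor
          · rintro (⟨h, rfl⟩ | ⟨-, rfl⟩); exacts [absurd h hn, rfl]
          · rintro rfl; exact Or.inr ⟨hn1j, rfl⟩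
        rw [hint, hrepj]
        simp only [bval]
        rw [Finset.sum_singleton, Finset.sum_singleton]
        exact hwc
      · have hint : A j ∩ {n, n+1} = ∅ := by
          ext t
          simp only [Finset.mem_inter, Finset.mem_insert, Finset.mem_singleton,
            Finset.notMem_empty, iff_false, not_and]
          rintro ht (rfl | rfl); exacts [hn ht, hn1j ht]
        have hrepj : rep j = ∅ := by
          ext t
          rw [hmemrep]
          simp only [Finset.notMem_empty, iff_false]
          rintro (⟨h, -⟩ | ⟨h, -⟩); exacts [hn h, hn1j h]
        rw [hint, hrepj]
    rw [add_comm (bval w (A j ∩ {n, n+1}))]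
    exact add_le_add le_rfl key
  set N' := N \ {i} with hN'
  set M' := M \ {n, n+1} with hM'
  set σ : ℕ → ℕ := fun j => if j = k then i else j with hσ
  have hσmem : ∀ j ∈ N', σ j ∈ N ∧ σ j ≠ k := by
    intro j hj
    obtain ⟨hjN, hji⟩ := Finset.mem_sdiff.mp hj
    rw [hσ]; simp only
    by_cases h : j = k
    · rw [if_pos h]
      refine ⟨hi, fun hik => ?_⟩
      exact hji (Finset.mem_singleton.mpr (h.trans hik.symm))
    · rw [if_neg h]; exact ⟨hjN, h⟩
  have hσinj : ∀ j ∈ N', ∀ j' ∈ N', σ j = σ j' → j = j' := by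
    intro j hj j' hj' h
    rw [hσ] at h; simp only at h
    by_cases h1 : j = k
    · by_cases h2 : j' = k
      · rw [h1, h2]
      · rw [if_pos h1, if_neg h2] at h
        exact absurd (Finset.mem_singleton.mpr h.symm) (Finset.mem_sdiff.mp hj').2
    · by_cases h2 : j' = k
      · rw [if_neg h1, if_pos h2] at h
        exact absurd (Finset.mem_singleton.mpr h) (Finset.mem_sdiff.mp hj).2
      · rw [if_neg h1, if_neg h2] at h; exact h
  set C : ℕ → Finset ℕ := fun j => B (σ j) with hC
  set D : ℕ → Finset ℕ :=
    fun j => if j = i' then M' \ ((N'.erase i').biUnion C) else C j with hD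
  have hi'N' : i' ∈ N' := hi'
  have hCsub : ∀ j ∈ N', C j ⊆ M' := by
    intro j hj
    obtain ⟨h1, h2⟩ := hσmem j hj
    exact hBsub (σ j) h1 h2
  have hCdisj : ∀ j ∈ N', ∀ j' ∈ N', j ≠ j' → Disjoint (C j) (C j') := by
    intro j hj j' hj' hjj'
    obtain ⟨h1, h2⟩ := hσmem j hj
    obtain ⟨h1', h2'⟩ := hσmem j' hj'
    exact hBdisj (σ j) h1 (σ j') h1' h2 h2' (fun h => hjj' (hσinj j hj j' hj' h))
  have hDpart : IsPartition N' M' D := by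
    refine ⟨?_, ?_, ?_⟩
    · intro j hj
      rw [hD]; simp only
      by_cases h : j = i'
      · rw [if_pos h]; exact Finset.sdiff_subset
      · rw [if_neg h]; exact hCsub j hj
    · intro j hj j' hj' hjj'
      rw [hD]; simp only
      by_cases h : j = i' <;> by_cases h' : j' = i'
      · exact absurd (h.trans h'.symm) hjj'
      · rw [if_pos h, if_neg h']
        have hsub' : C j' ⊆ (N'.erase i').biUnion C := fun x hx =>
          Finset.mem_biUnion.mpr ⟨j', Finset.mem_erase.mpr ⟨h', hj'⟩, hx⟩
        exact Disjoint.mono_right hsub' Finset.sdiff_disjoint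
      · rw [if_neg h, if_pos h']
        have hsub' : C j ⊆ (N'.erase i').biUnion C := fun x hx =>
          Finset.mem_biUnion.mpr ⟨j, Finset.mem_erase.mpr ⟨h, hj⟩, hx⟩
        exact (Disjoint.mono_right hsub' Finset.sdiff_disjoint).symm
      · rw [if_neg h, if_neg h']; exact hCdisj j hj j' hj' hjj'
    · apply Finset.Subset.antisymm
      · intro x hx
        obtain ⟨j, hj, hjx⟩ := Finset.mem_biUnion.mp hx
        rw [hD] at hjx; simp only at hjx
        by_cases h : j = i'
        · rw [if_pos h] at hjx; exact (Finset.mem_sdiff.mp hjx).1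
        · rw [if_neg h] at hjx; exact hCsub j hj hjx
      · intro x hx
        by_cases h : x ∈ (N'.erase i').biUnion C
        · obtain ⟨j, hj, hjx⟩ := Finset.mem_biUnion.mp h
          have hjN' : j ∈ N' := Finset.mem_of_mem_erase hj
          refine Finset.mem_biUnion.mpr ⟨j, hjN', ?_⟩
          rw [hD]; simp only
          rw [if_neg (Finset.mem_erase.mp hj).1]
          exact hjx
        · refine Finset.mem_biUnion.mpr ⟨i', hi'N', ?_⟩
          rw [hD]; simp only [if_pos rfl]
          exact Finset.mem_sdiff.mpr ⟨hx, h⟩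
  have hDval : ∀ j ∈ N', μ ≤ bval w (D j) := by
    intro j hj
    have base : ∀ j' ∈ N', μ ≤ bval w (C j') := by
      intro j' hj'
      obtain ⟨h1, h2⟩ := hσmem j' hj'
      exact (hAmin (σ j') h1).trans (hBval (σ j') h1 h2)
    rw [hD]; simp only
    by_cases h : j = i'
    · rw [if_pos h]
      refine (base i' hi'N').trans ?_
      have hCD : C i' ⊆ M' \ (N'.erase i').biUnion C := by
        intro x hx
        refine Finset.mem_sdiff.mpr ⟨hCsub i' hi'N' hx, fun hmem => ?_⟩
        obtain ⟨j', hj', hjx⟩ := Finset.mem_biUnion.mp hmem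
        have hj'N' : j' ∈ N' := Finset.mem_of_mem_erase hj'
        exact Finset.disjoint_left.mp
          (hCdisj i' hi'N' j' hj'N' (Ne.symm (Finset.mem_erase.mp hj').1)) hx hjx
      simp only [bval]
      apply Finset.sum_le_sum_of_subset_of_nonneg hCD
      intro g hg _
      exact hw g (Finset.mem_sdiff.mp (Finset.mem_sdiff.mp hg).1).1
    · rw [if_neg h]; exact base j hj
  exact le_mms_of_partition N' M' w D hDpart μ ⟨i', hi'N'⟩ hDval

theorem pigeonhole_reduction_two (n m : ℕ) (hm : n + 1 ≤ m) (v : ℕ → ℕ → ℝ)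
    (hgoods : GoodsInstance (Finset.Icc 1 n) (Finset.Icc 1 m) v)
    (hord : OrderedGoods (Finset.Icc 1 n) (Finset.Icc 1 m) v)
    (i : ℕ) (hi : i ∈ Finset.Icc 1 n)
    (hval : mms (Finset.Icc 1 n) (Finset.Icc 1 m) (v i) ≤ bval (v i) {n, n + 1}) :
    ValidReduction (Finset.Icc 1 n) (Finset.Icc 1 m) v {i} {n, n + 1} := by
  
  obtain ⟨h1i, hin⟩ := Finset.mem_Icc.mp hi
  have hn1 : 1 ≤ n := le_trans h1i hin
  have hnM : n ∈ Finset.Icc 1 m := Finset.mem_Icc.mpr ⟨hn1, (Nat.le_succ n).trans hm⟩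
  have hn1M : n + 1 ∈ Finset.Icc 1 m := Finset.mem_Icc.mpr ⟨hn1.trans (Nat.le_succ n), hm⟩
  refine ⟨Finset.singleton_subset_iff.mpr hi, ?_, ⟨fun _ => {n, n + 1}, ⟨?_, ?_, ?_⟩, ?_⟩, ?_⟩
  · intro x hx
    rcases Finset.mem_insert.mp hx with rfl | hx
    · exact hnM
    · exact (Finset.mem_singleton.mp hx) ▸ hn1M
  · intro _ _
    exact Finset.Subset.refl _
  · intro a ha b hb hab
    exact absurd ((Finset.mem_singleton.mp ha).trans (Finset.mem_singleton.mp hb).symm) hab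
  · exact Finset.singleton_biUnion
  · intro j hj
    rw [Finset.mem_singleton.mp hj]
    exact hval
  · intro i' hi'
    have hi'N : i' ∈ Finset.Icc 1 n := (Finset.mem_sdiff.mp hi').1
    exact reduction_step n m hm hn1 (v i')
      (fun j hj => hgoods i' hi'N j hj)
      (fun j hj k hk hjk => hord i' hi'N j hj k hk hjk)
      i hi i' hi'
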